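/- Let f₁, …, f_s be a family of E-polynomials (functions of the form F(x, e^{h(x)}) with F ∈ ℤ[X,Y], h ∈ ℤ[X]) closed under pseudo-derivation, and let ε : {1,…,s} → {−1,0,1}. Then the set A_ε = {x ∈ ℝ : sign(f_i(x)) = ε(i) for all 1 ≤ i ≤ s} is either empty, a single point, or an open interval. -/

import Mathlib

noncomputable section

/-- Evaluation of a bivariate integer polynomial (a polynomial in `Y` with coefficients
in `ℤ[X]`) at `(x, y) ∈ ℝ²`. -/
def ev (P : Polynomial (Polynomial ℤ)) (x y : ℝ) : ℝ :=
  Polynomial.eval₂ (Polynomial.eval₂RingHom (Int.castRingHom ℝ) x) y P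

/-- The E-polynomial `x ↦ F(x, e^{h(x)})`. -/
def epoly (h : Polynomial ℤ) (F : Polynomial (Polynomial ℤ)) (x : ℝ) : ℝ :=
  ev F x (Real.exp (Polynomial.eval₂ (Int.castRingHom ℝ) x h))

/-- Partial derivative with respect to `X` (the inner variable). -/
def dX (P : Polynomial (Polynomial ℤ)) : Polynomial (Polynomial ℤ) :=
  P.sum fun n c => Polynomial.C (Polynomial.derivative c) * Polynomial.X ^ n

/-- The polynomial `F̃ = ∂F/∂X + (∂F/∂Y)·h'(X)·Y` defining the derivative of the
E-polynomial `x ↦ F(x, e^{h(x)})`. -/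
def FtildeE (h : Polynomial ℤ) (F : Polynomial (Polynomial ℤ)) : Polynomial (Polynomial ℤ) :=
  dX F + Polynomial.derivative F * (Polynomial.C (Polynomial.derivative h) * Polynomial.X)

/-- The pseudo-derivative at the level of defining polynomials: it is `F̃` when
`deg_X F(X,0) > 0`; when `F(X,0)` is constant and `F̃ ≠ 0` it is `F̃` divided by the
largest power `Y^k` dividing it; and it is `0` when `F̃ = 0`. -/
def pderPoly (h : Polynomial ℤ) (F : Polynomial (Polynomial ℤ)) : Polynomial (Polynomial ℤ) :=
  let Ft := FtildeE h F
  if Ft = 0 then 0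
  else if 0 < (F.coeff 0).natDegree then Ft
  else Polynomial.divX^[Ft.natTrailingDegree] Ft

open Polynomial Set Filter

namespace EAux

abbrev c : ℤ →+* ℝ := Int.castRingHom ℝ

lemma hasDerivAt_evalInt (p : Polynomial ℤ) (x : ℝ) :
    HasDerivAt (fun y => eval₂ c y p) (eval₂ c x (derivative p)) x := by
  simp only [eval₂_eq_eval_map, ← derivative_map]
  exact Polynomial.hasDerivAt _ x

lemma analyticAt_evalInt (p : Polynomial ℤ) (x : ℝ) :
    AnalyticAt ℝ (fun y => eval₂ c y p) x := by
  have := (analyticAt_id (𝕜 := ℝ) (E := ℝ)).aeval_polynomial (p.map c) (z := x)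
  simp only [id] at this
  convert this using 2 with y
  · rfl
  · rfl
  rw [eval₂_eq_eval_map, aeval_def, eval_map, eval₂_map]
  rfl

lemma epoly_add (h : Polynomial ℤ) (P Q : Polynomial (Polynomial ℤ)) (x : ℝ) :
    epoly h (P + Q) x = epoly h P x + epoly h Q x := by
  simp [epoly, ev, eval₂_add]

lemma epoly_zero (h : Polynomial ℤ) (x : ℝ) : epoly h 0 x = 0 := by simp [epoly, ev]

lemma epoly_monomial (h : Polynomial ℤ) (n : ℕ) (a : Polynomial ℤ) (x : ℝ) :
    epoly h (monomial n a) x = eval₂ c x a * Real.exp (eval₂ c x h) ^ n := by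
  simp [epoly, ev, eval₂_monomial]

lemma dX_add (P Q : Polynomial (Polynomial ℤ)) : dX (P + Q) = dX P + dX Q := by
  unfold dX
  apply sum_add_index <;> intros <;> simp [add_mul]

lemma FtildeE_add (h : Polynomial ℤ) (P Q : Polynomial (Polynomial ℤ)) :
    FtildeE h (P + Q) = FtildeE h P + FtildeE h Q := by
  unfold FtildeE
  rw [dX_add, derivative_add, add_mul]
  ring

lemma dX_monomial (n : ℕ) (a : Polynomial ℤ) :
    dX (monomial n a) = C (derivative a) * X ^ n := by
  unfold dX
  rw [sum_monomial_index]
  simp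

lemma hasDerivAt_epoly (h : Polynomial ℤ) (F : Polynomial (Polynomial ℤ)) (x : ℝ) :
    HasDerivAt (epoly h F) (epoly h (FtildeE h F) x) x := by
  induction F using Polynomial.induction_on' with
  | add p q hp hq =>
    have hfun : epoly h (p + q) = fun y => epoly h p y + epoly h q y :=
      funext fun y => epoly_add h p q y
    rw [hfun, FtildeE_add, epoly_add]
    exact hp.add hq
  | monomial n a =>
    have hfun : epoly h (monomial n a)
        = fun y => eval₂ c y a * Real.exp (eval₂ c y h) ^ n :=
      funext fun y => epoly_monomial h n a y
    rw [hfun]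
    have key := (hasDerivAt_evalInt a x).mul (((hasDerivAt_evalInt h x).exp).pow n)
    convert key using 1
    · rfl
    · rfl
    · rfl
    rw [FtildeE, dX_monomial, derivative_monomial]
    rw [epoly_add]
    set E := Real.exp (eval₂ c x h) with hE
    have h1 : epoly h (C (derivative a) * X ^ n) x = eval₂ c x (derivative a) * E ^ n := by
      simp [epoly, ev, hE]
    have h2 : epoly h (monomial (n - 1) (a * n) * (C (derivative h) * X)) x
        = (eval₂ c x a * n) * E ^ (n - 1) * (eval₂ c x (derivative h) * E) := by
      simp [epoly, ev, eval₂_monomial, eval₂_mul, hE]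
    rw [h1, h2]
    cases n with
    | zero => simp
    | succ m => simp only [Nat.add_sub_cancel, Pi.pow_apply, ← hE]; push_cast; ring

lemma differentiable_epoly (h : Polynomial ℤ) (F : Polynomial (Polynomial ℤ)) :
    Differentiable ℝ (epoly h F) := fun x => (hasDerivAt_epoly h F x).differentiableAt

lemma continuous_epoly (h : Polynomial ℤ) (F : Polynomial (Polynomial ℤ)) :
    Continuous (epoly h F) := (differentiable_epoly h F).continuous

lemma analyticAt_epoly (h : Polynomial ℤ) (F : Polynomial (Polynomial ℤ)) (x : ℝ) :
    AnalyticAt ℝ (epoly h F) x := by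
  induction F using Polynomial.induction_on' with
  | add p q hp hq =>
    have hfun : epoly h (p + q) = fun y => epoly h p y + epoly h q y :=
      funext fun y => epoly_add h p q y
    rw [hfun]; exact hp.add hq
  | monomial n a =>
    have hfun : epoly h (monomial n a)
        = fun y => eval₂ c y a * Real.exp (eval₂ c y h) ^ n :=
      funext fun y => epoly_monomial h n a y
    rw [hfun]
    exact (analyticAt_evalInt a x).mul
      ((analyticAt_rexp.comp (analyticAt_evalInt h x)).pow n)

end EAux

namespace EAux

lemma sign_mul_pos {a : ℝ} (ha : 0 < a) (b : ℝ) : Real.sign (a * b) = Real.sign b := by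
  rcases lt_trichotomy b 0 with hb | rfl | hb
  · rw [Real.sign_of_neg hb, Real.sign_of_neg (mul_neg_of_pos_of_neg ha hb)]
  · rw [mul_zero]
  · rw [Real.sign_of_pos hb, Real.sign_of_pos (mul_pos ha hb)]

lemma pos_of_sign_eq_one {x : ℝ} (hx : Real.sign x = 1) : 0 < x := by
  rcases lt_trichotomy x 0 with hb | rfl | hb
  · rw [Real.sign_of_neg hb] at hx; norm_num at hx
  · rw [Real.sign_zero] at hx; norm_num at hx
  · exact hb

lemma neg_of_sign_eq_neg_one {x : ℝ} (hx : Real.sign x = -1) : x < 0 := by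
  rcases lt_trichotomy x 0 with hb | rfl | hb
  · exact hb
  · rw [Real.sign_zero] at hx; norm_num at hx
  · rw [Real.sign_of_pos hb] at hx; norm_num at hx

lemma X_pow_mul_divX_iter (t : ℕ) :
    ∀ p : Polynomial (Polynomial ℤ), (∀ k < t, p.coeff k = 0) →
      X ^ t * (divX^[t] p) = p := by
  induction t with
  | zero => intro p _; simp
  | succ m ih =>
    intro p hp
    rw [Function.iterate_succ_apply, pow_succ', mul_assoc,
      ih (divX p) (fun k hk => by rw [coeff_divX]; exact hp _ (by omega))]
    have h2 := X_mul_divX_add p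
    rw [hp 0 (Nat.succ_pos m), map_zero, add_zero] at h2
    exact h2

lemma epoly_X_pow_mul (h : Polynomial ℤ) (t : ℕ) (G : Polynomial (Polynomial ℤ)) (x : ℝ) :
    epoly h (X ^ t * G) x = Real.exp (eval₂ c x h) ^ t * epoly h G x := by
  simp [epoly, ev, eval₂_mul, eval₂_X_pow]

lemma sign_epoly_Ftilde (h : Polynomial ℤ) (F : Polynomial (Polynomial ℤ)) (x : ℝ) :
    Real.sign (epoly h (FtildeE h F) x) = Real.sign (epoly h (pderPoly h F) x) := by
  simp only [pderPoly]
  by_cases h0 : FtildeE h F = 0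
  · rw [if_pos h0, h0]
  · rw [if_neg h0]
    by_cases h1 : 0 < (F.coeff 0).natDegree
    · rw [if_pos h1]
    · rw [if_neg h1]
      set t := (FtildeE h F).natTrailingDegree
      have hdec : X ^ t * (divX^[t] (FtildeE h F)) = FtildeE h F :=
        X_pow_mul_divX_iter t _ (fun k hk => coeff_eq_zero_of_lt_natTrailingDegree hk)
      conv_lhs => rw [← hdec]
      rw [epoly_X_pow_mul]
      exact sign_mul_pos (pow_pos (Real.exp_pos _) t) _

lemma natDegree_dX_le (F : Polynomial (Polynomial ℤ)) : (dX F).natDegree ≤ F.natDegree := by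
  unfold dX
  rw [Polynomial.sum_def]
  apply Polynomial.natDegree_sum_le_of_forall_le
  intro n hn
  calc (C (derivative (F.coeff n)) * X ^ n).natDegree
      ≤ (C (derivative (F.coeff n))).natDegree + (X ^ n : Polynomial (Polynomial ℤ)).natDegree :=
        natDegree_mul_le
    _ ≤ n := by simp
    _ ≤ F.natDegree := le_natDegree_of_mem_supp n hn

lemma natDegree_Ftilde_le (h : Polynomial ℤ) (F : Polynomial (Polynomial ℤ)) :
    (FtildeE h F).natDegree ≤ F.natDegree := by
  unfold FtildeE
  refine le_trans (natDegree_add_le _ _) (max_le (natDegree_dX_le F) ?_)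
  by_cases h0 : F.natDegree = 0
  · rw [eq_C_of_natDegree_eq_zero h0]
    simp
  · refine le_trans natDegree_mul_le ?_
    have h1 : (derivative F).natDegree ≤ F.natDegree - 1 := natDegree_derivative_le F
    have h2 : (C (derivative h) * X : Polynomial (Polynomial ℤ)).natDegree ≤ 1 :=
      le_trans natDegree_mul_le (by simp)
    omega

lemma coeff_zero_dX (F : Polynomial (Polynomial ℤ)) :
    (dX F).coeff 0 = derivative (F.coeff 0) := by
  unfold dX
  rw [Polynomial.sum_def, finset_sum_coeff]
  have hterm : ∀ n ∈ F.support, (C (derivative (F.coeff n)) * X ^ n).coeff 0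
      = if n = 0 then derivative (F.coeff 0) else 0 := by
    intro n _
    rcases Nat.eq_zero_or_pos n with rfl | hn
    · simp
    · have hne : n ≠ 0 := hn.ne'
      simp [coeff_C_mul, coeff_X_pow, hne, Ne.symm hne]
  rw [Finset.sum_congr rfl hterm,
    Finset.sum_ite_eq' F.support 0 (fun _ => derivative (F.coeff 0))]
  by_cases h0 : (0 : ℕ) ∈ F.support
  · rw [if_pos h0]
  · rw [if_neg h0, notMem_support_iff.mp h0, derivative_zero]

lemma coeff_zero_Ftilde (h : Polynomial ℤ) (F : Polynomial (Polynomial ℤ)) :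
    (FtildeE h F).coeff 0 = derivative (F.coeff 0) := by
  unfold FtildeE
  rw [coeff_add, coeff_zero_dX, mul_coeff_zero, mul_coeff_zero]
  simp

lemma dX_C (a : Polynomial ℤ) : dX (C a) = C (derivative a) := by
  rw [← monomial_zero_left, dX_monomial]
  simp

lemma measure_drop (h : Polynomial ℤ) (F : Polynomial (Polynomial ℤ))
    (hFt : FtildeE h F ≠ 0) :
    (pderPoly h F).natDegree < F.natDegree ∨
    ((pderPoly h F).natDegree ≤ F.natDegree ∧
      ((pderPoly h F).coeff 0).natDegree < ((F.coeff 0)).natDegree) := by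
  by_cases h1 : 0 < (F.coeff 0).natDegree
  · right
    have hp : pderPoly h F = FtildeE h F := by
      simp only [pderPoly]; rw [if_neg hFt, if_pos h1]
    rw [hp, coeff_zero_Ftilde]
    exact ⟨natDegree_Ftilde_le h F, natDegree_derivative_lt (by omega)⟩
  · left
    have h1' : (F.coeff 0).natDegree = 0 := by omega
    have hc0 : (FtildeE h F).coeff 0 = 0 := by
      rw [coeff_zero_Ftilde, eq_C_of_natDegree_eq_zero h1', derivative_C]
    have hdF : F.natDegree ≠ 0 := by
      intro h0
      apply hFt
      obtain ⟨a, ha⟩ : ∃ a, F = C a := ⟨_, eq_C_of_natDegree_eq_zero h0⟩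
      subst ha
      have ha0 : a.natDegree = 0 := by rwa [coeff_C_zero] at h1'
      have hda : derivative a = 0 := by
        rw [eq_C_of_natDegree_eq_zero ha0, derivative_C]
      simp [FtildeE, dX_C, hda]
    have ht : 0 < (FtildeE h F).natTrailingDegree := by
      have := le_natTrailingDegree hFt (n := 1) (fun m hm => by
        interval_cases m
        exact hc0)
      omega
    set t := (FtildeE h F).natTrailingDegree with hts
    have hdec : X ^ t * (divX^[t] (FtildeE h F)) = FtildeE h F :=
      X_pow_mul_divX_iter t _ (fun k hk => coeff_eq_zero_of_lt_natTrailingDegree hk)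
    have hp : pderPoly h F = divX^[t] (FtildeE h F) := by
      simp only [pderPoly]; rw [if_neg hFt, if_neg h1]
    have hGne : divX^[t] (FtildeE h F) ≠ 0 := by
      intro h0
      rw [h0, mul_zero] at hdec
      exact hFt hdec.symm
    have hdeg : t + (divX^[t] (FtildeE h F)).natDegree = (FtildeE h F).natDegree := by
      conv_rhs => rw [← hdec]
      rw [natDegree_mul (pow_ne_zero t X_ne_zero) hGne, natDegree_X_pow]
    have hle := natDegree_Ftilde_le h F
    rw [hp]
    omega

end EAux

theorem sign_condition_set_interval (h : Polynomial ℤ) (hh : 0 < h.natDegree) (s : ℕ)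
    (F : Fin s → Polynomial (Polynomial ℤ))
    (hclosed : ∀ i, ∃ j, pderPoly h (F i) = F j)
    (ε : Fin s → ℝ) (hε : ∀ i, ε i = -1 ∨ ε i = 0 ∨ ε i = 1) :
    {x : ℝ | ∀ i, Real.sign (epoly h (F i) x) = ε i} = ∅ ∨
    (∃ p : ℝ, {x : ℝ | ∀ i, Real.sign (epoly h (F i) x) = ε i} = {p}) ∨
    (IsOpen {x : ℝ | ∀ i, Real.sign (epoly h (F i) x) = ε i} ∧
      Set.OrdConnected {x : ℝ | ∀ i, Real.sign (epoly h (F i) x) = ε i} ∧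
      Set.Nonempty {x : ℝ | ∀ i, Real.sign (epoly h (F i) x) = ε i}) := by
  classical
  set A := {x : ℝ | ∀ i, Real.sign (epoly h (F i) x) = ε i} with hAdef
  set B : ℕ := (Finset.univ.sup fun i : Fin s => ((F i).coeff 0).natDegree) + 1 with hBdef
  have hBlt : ∀ i : Fin s, ((F i).coeff 0).natDegree < B := fun i =>
    Nat.lt_succ_of_le (Finset.le_sup (f := fun i : Fin s => ((F i).coeff 0).natDegree) (Finset.mem_univ i))
  set meas : Fin s → ℕ := fun i => (F i).natDegree * B + ((F i).coeff 0).natDegree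
    with hmeasdef
  have key : ∀ N : ℕ, ∀ i : Fin s, meas i ≤ N → ∀ a b : ℝ, a ∈ A → b ∈ A → a ≤ b →
      ∀ x ∈ Set.Icc a b, Real.sign (epoly h (F i) x) = ε i := by
    intro N
    induction N using Nat.strong_induction_on with
    | _ N IH =>
      intro i hiN a b ha hb hab x hx
      have hai : Real.sign (epoly h (F i) a) = ε i := ha i
      have hbi : Real.sign (epoly h (F i) b) = ε i := hb i
      by_cases hFt : FtildeE h (F i) = 0
      · have hconst : ∀ u v : ℝ, epoly h (F i) u = epoly h (F i) v :=
          is_const_of_deriv_eq_zero (EAux.differentiable_epoly h (F i))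
            (fun u => by rw [(EAux.hasDerivAt_epoly h (F i) u).deriv, hFt, EAux.epoly_zero])
        rw [hconst x a]; exact hai
      · obtain ⟨j, hj⟩ := hclosed i
        have hmj : meas j < meas i := by
          rcases EAux.measure_drop h (F i) hFt with hlt | ⟨hle, hlt⟩
          · rw [hj] at hlt
            calc meas j = (F j).natDegree * B + ((F j).coeff 0).natDegree := rfl
              _ < (F j).natDegree * B + B := by have := hBlt j; omega
              _ = ((F j).natDegree + 1) * B := by ring
              _ ≤ (F i).natDegree * B := Nat.mul_le_mul_right B hlt
              _ ≤ meas i := Nat.le_add_right _ _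
          · rw [hj] at hle hlt
            have h2 := Nat.mul_le_mul_right B hle
            calc meas j = (F j).natDegree * B + ((F j).coeff 0).natDegree := rfl
              _ < (F i).natDegree * B + ((F i).coeff 0).natDegree := by omega
              _ = meas i := rfl
        have hsj : ∀ y ∈ Set.Icc a b, Real.sign (epoly h (F j) y) = ε j :=
          IH (meas j) (lt_of_lt_of_le hmj hiN) j le_rfl a b ha hb hab
        have hderiv_sign : ∀ y, Real.sign (epoly h (FtildeE h (F i)) y)
            = Real.sign (epoly h (F j) y) := fun y => by
          rw [EAux.sign_epoly_Ftilde, hj]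
        rcases hε j with hj0 | hj0 | hj0
        · -- ε j = -1 : derivative negative, strictly decreasing
          have hneg : ∀ y ∈ Set.Icc a b, epoly h (FtildeE h (F i)) y < 0 := fun y hy =>
            EAux.neg_of_sign_eq_neg_one (by rw [hderiv_sign y, hsj y hy, hj0])
          have hanti : StrictAntiOn (epoly h (F i)) (Set.Icc a b) := by
            apply strictAntiOn_of_deriv_neg (convex_Icc a b)
              (EAux.continuous_epoly h (F i)).continuousOn
            intro y hy
            rw [interior_Icc] at hy
            rw [(EAux.hasDerivAt_epoly h (F i) y).deriv]
            exact hneg y (Set.Ioo_subset_Icc_self hy)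
          rcases eq_or_lt_of_le hx.1 with h1 | h1
          · rw [← h1]; exact hai
          rcases eq_or_lt_of_le hx.2 with h2 | h2
          · rw [h2]; exact hbi
          have hgt : epoly h (F i) b < epoly h (F i) x := hanti hx ⟨hab, le_rfl⟩ h2
          have hlt2 : epoly h (F i) x < epoly h (F i) a := hanti ⟨le_rfl, hab⟩ hx h1
          rcases hε i with hi0 | hi0 | hi0
          · rw [hi0] at hai ⊢
            have hA0 : epoly h (F i) a < 0 := EAux.neg_of_sign_eq_neg_one hai
            exact Real.sign_of_neg (hlt2.trans hA0)
          · rw [hi0] at hai hbi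
            have hA0 : epoly h (F i) a = 0 := Real.sign_eq_zero_iff.mp hai
            have hB0 : epoly h (F i) b = 0 := Real.sign_eq_zero_iff.mp hbi
            exact absurd (hgt.trans hlt2) (by rw [hA0, hB0]; exact lt_irrefl 0)
          · rw [hi0] at hbi ⊢
            have hB0 : 0 < epoly h (F i) b := EAux.pos_of_sign_eq_one hbi
            exact Real.sign_of_pos (hB0.trans hgt)
        · -- ε j = 0 : derivative zero, constant on [a,b]
          have hz0 : ∀ y ∈ Set.Icc a b, epoly h (FtildeE h (F i)) y = 0 := fun y hy =>
            Real.sign_eq_zero_iff.mp (by rw [hderiv_sign y, hsj y hy, hj0])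
          have hconst := constant_of_has_deriv_right_zero
            ((EAux.continuous_epoly h (F i)).continuousOn (s := Set.Icc a b))
            (fun y hy => by
              have hd := (EAux.hasDerivAt_epoly h (F i) y).hasDerivWithinAt
                (s := Set.Ici y)
              rwa [hz0 y (Set.Ico_subset_Icc_self hy)] at hd)
          rw [hconst x hx]; exact hai
        · -- ε j = 1 : derivative positive, strictly increasing
          have hpos : ∀ y ∈ Set.Icc a b, 0 < epoly h (FtildeE h (F i)) y := fun y hy =>
            EAux.pos_of_sign_eq_one (by rw [hderiv_sign y, hsj y hy, hj0])
          have hmono : StrictMonoOn (epoly h (F i)) (Set.Icc a b) := by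
            apply strictMonoOn_of_deriv_pos (convex_Icc a b)
              (EAux.continuous_epoly h (F i)).continuousOn
            intro y hy
            rw [interior_Icc] at hy
            rw [(EAux.hasDerivAt_epoly h (F i) y).deriv]
            exact hpos y (Set.Ioo_subset_Icc_self hy)
          rcases eq_or_lt_of_le hx.1 with h1 | h1
          · rw [← h1]; exact hai
          rcases eq_or_lt_of_le hx.2 with h2 | h2
          · rw [h2]; exact hbi
          have hgt : epoly h (F i) a < epoly h (F i) x := hmono ⟨le_rfl, hab⟩ hx h1
          have hlt2 : epoly h (F i) x < epoly h (F i) b := hmono hx ⟨hab, le_rfl⟩ h2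
          rcases hε i with hi0 | hi0 | hi0
          · rw [hi0] at hbi ⊢
            have hB0 : epoly h (F i) b < 0 := EAux.neg_of_sign_eq_neg_one hbi
            exact Real.sign_of_neg (hlt2.trans hB0)
          · rw [hi0] at hai hbi
            have hA0 : epoly h (F i) a = 0 := Real.sign_eq_zero_iff.mp hai
            have hB0 : epoly h (F i) b = 0 := Real.sign_eq_zero_iff.mp hbi
            exact absurd (hgt.trans hlt2) (by rw [hA0, hB0]; exact lt_irrefl 0)
          · rw [hi0] at hai ⊢
            have hA0 : 0 < epoly h (F i) a := EAux.pos_of_sign_eq_one hai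
            exact Real.sign_of_pos (hA0.trans hgt)
  have hOrd : A.OrdConnected := by
    constructor
    intro x hx y hy z hz
    exact fun i => key (meas i) i le_rfl x y hx hy (le_trans hz.1 hz.2) z hz
  by_cases hemp : A = ∅
  · exact Or.inl hemp
  obtain ⟨p, hp⟩ := Set.nonempty_iff_ne_empty.mpr hemp
  by_cases huniq : ∀ q ∈ A, q = p
  · exact Or.inr (Or.inl ⟨p, Set.eq_singleton_iff_unique_mem.mpr ⟨hp, huniq⟩⟩)
  push_neg at huniq
  obtain ⟨q, hq, hqp⟩ := huniq
  have haA : min p q ∈ A := by rcases min_choice p q with h1 | h1 <;> rw [h1] <;> assumption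
  have hbA : max p q ∈ A := by rcases max_choice p q with h1 | h1 <;> rw [h1] <;> assumption
  have hab : min p q < max p q := min_lt_max.mpr (Ne.symm hqp)
  refine Or.inr (Or.inr ⟨?_, hOrd, ⟨p, hp⟩⟩)
  rw [isOpen_iff_mem_nhds]
  intro z hz
  have hev : ∀ᶠ x in nhds z, ∀ i, Real.sign (epoly h (F i) x) = ε i := by
    rw [Filter.eventually_all]
    intro i
    rcases hε i with hi | hi | hi
    · have hzneg : epoly h (F i) z < 0 := EAux.neg_of_sign_eq_neg_one (by rw [hz i, hi])
      have hopen : IsOpen {x : ℝ | epoly h (F i) x < 0} :=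
        isOpen_lt (EAux.continuous_epoly h (F i)) continuous_const
      filter_upwards [hopen.mem_nhds hzneg] with w hw
      rw [Real.sign_of_neg hw, hi]
    · have hIcc : Set.Icc (min p q) (max p q) ⊆ A := hOrd.out haA hbA
      have hz0 : ∀ y ∈ Set.Icc (min p q) (max p q), epoly h (F i) y = 0 := fun y hy =>
        Real.sign_eq_zero_iff.mp (by rw [(hIcc hy) i, hi])
      have hfreq : ∃ᶠ w in nhdsWithin (min p q) {min p q}ᶜ, epoly h (F i) w = 0 := by
        have hev2 : ∀ᶠ w in nhdsWithin (min p q) (Set.Ioi (min p q)),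
            epoly h (F i) w = 0 := by
          filter_upwards [Ioc_mem_nhdsGT_of_mem (Set.mem_Ico.mpr ⟨le_rfl, hab⟩)] with w hw
          exact hz0 w (Set.Ioc_subset_Icc_self hw)
        exact (hev2.frequently).filter_mono
          (nhdsWithin_mono _ (fun w hw => Set.mem_compl_singleton_iff.mpr (ne_of_gt hw)))
      have hzero : Set.EqOn (epoly h (F i)) 0 Set.univ :=
        AnalyticOnNhd.eqOn_zero_of_preconnected_of_frequently_eq_zero
          (fun x _ => EAux.analyticAt_epoly h (F i) x)
          isPreconnected_univ (Set.mem_univ (min p q)) hfreq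
      refine Filter.Eventually.of_forall fun w => ?_
      rw [show epoly h (F i) w = 0 from hzero (Set.mem_univ w), Real.sign_zero, hi]
    · have hzpos : 0 < epoly h (F i) z := EAux.pos_of_sign_eq_one (by rw [hz i, hi])
      have hopen : IsOpen {x : ℝ | 0 < epoly h (F i) x} :=
        isOpen_lt continuous_const (EAux.continuous_epoly h (F i))
      filter_upwards [hopen.mem_nhds hzpos] with w hw
      rw [Real.sign_of_pos hw, hi]
  exact hev

end
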